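/- The operator sym∘Curl on ℝ^{3×3}-valued fields is cancelling: the intersection over all nonzero ξ ∈ ℝ³ of the images { sym(P · Anti(ξ)) : P ∈ ℝ^{3×3} } is {0}. -/

import Mathlib

open Matrix

noncomputable section

def Anti (ξ : Fin 3 → ℝ) : Matrix (Fin 3) (Fin 3) ℝ :=
  !![0, -ξ 2, ξ 1; ξ 2, 0, -ξ 0; -ξ 1, ξ 0, 0]

def sym (X : Matrix (Fin 3) (Fin 3) ℝ) : Matrix (Fin 3) (Fin 3) ℝ := (1/2 : ℝ) • (X + Xᵀ)

def skw (X : Matrix (Fin 3) (Fin 3) ℝ) : Matrix (Fin 3) (Fin 3) ℝ := (1/2 : ℝ) • (X - Xᵀ)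

def dev (X : Matrix (Fin 3) (Fin 3) ℝ) : Matrix (Fin 3) (Fin 3) ℝ :=
  X - (Matrix.trace X / 3) • (1 : Matrix (Fin 3) (Fin 3) ℝ)

def cross (a b : Fin 3 → ℝ) : Fin 3 → ℝ :=
  ![a 1 * b 2 - a 2 * b 1, a 2 * b 0 - a 0 * b 2, a 0 * b 1 - a 1 * b 0]


lemma quad_zero (P : Matrix (Fin 3) (Fin 3) ℝ) (ξ : Fin 3 → ℝ) :
    ξ ⬝ᵥ (sym (P * Anti ξ)) *ᵥ ξ = 0 := by
  simp [sym, Anti, Matrix.mulVec, Matrix.mul_apply, dotProduct, Fin.sum_univ_three,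
    Matrix.transpose_apply, Matrix.add_apply, Matrix.smul_apply, Matrix.vecHead, Matrix.vecTail]
  ring

lemma sym_symm (X : Matrix (Fin 3) (Fin 3) ℝ) : (sym X)ᵀ = sym X := by
  ext i j
  simp [sym, Matrix.transpose_apply, Matrix.add_apply, Matrix.smul_apply]
  ring

theorem stmt_2 (E : Matrix (Fin 3) (Fin 3) ℝ)
    (h : ∀ ξ : Fin 3 → ℝ, ξ ≠ 0 → ∃ P : Matrix (Fin 3) (Fin 3) ℝ, sym (P * Anti ξ) = E) :
    E = 0 := by
  have hs : Eᵀ = E := by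
    obtain ⟨P, hP⟩ := h ![1, 0, 0] (by
      intro hc
      have := congrFun hc 0
      norm_num at this)
    rw [← hP]; exact sym_symm _
  have hq : ∀ ξ : Fin 3 → ℝ, ξ ≠ 0 → ξ ⬝ᵥ E *ᵥ ξ = 0 := by
    intro ξ hξ
    obtain ⟨P, hP⟩ := h ξ hξ
    rw [← hP]; exact quad_zero P ξ
  have ne : ∀ (a b c : ℝ), a ≠ 0 → (![a,b,c] : Fin 3 → ℝ) ≠ 0 := by
    intro a b c ha hc
    exact ha (by simpa using congrFun hc 0)
  have ne1 : ∀ (a b c : ℝ), b ≠ 0 → (![a,b,c] : Fin 3 → ℝ) ≠ 0 := by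
    intro a b c hb hc
    exact hb (by simpa using congrFun hc 1)
  have h00 := hq ![1,0,0] (ne _ _ _ one_ne_zero)
  have h11 := hq ![0,1,0] (ne1 _ _ _ one_ne_zero)
  have h22 := hq ![0,0,1] (by
    intro hc
    have := congrFun hc 2
    change (1:ℝ) = 0 at this
    norm_num at this)
  have h01 := hq ![1,1,0] (ne _ _ _ one_ne_zero)
  have h02 := hq ![1,0,1] (ne _ _ _ one_ne_zero)
  have h12 := hq ![0,1,1] (ne1 _ _ _ one_ne_zero)
  simp [Matrix.mulVec, dotProduct, Fin.sum_univ_three] at h00 h11 h22 h01 h02 h12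
  ext i j
  have hs01 := congrFun (congrFun hs 0) 1
  have hs02 := congrFun (congrFun hs 0) 2
  have hs12 := congrFun (congrFun hs 1) 2
  simp [Matrix.transpose_apply] at hs01 hs02 hs12
  fin_cases i <;> fin_cases j <;> simp <;> linarith
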